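/- In the weak commutativity group χ(G), for all elements α₁, α₂ belonging to the subgroup L₁ and β₁, β₂ belonging to the subgroup L₂, one has [α₁·α₂, β₁·β₂] = [α₁,β₁]·[α₁,β₂]·[α₂,β₁]·[α₂,β₂]. -/

import Mathlib

open Subgroup
open scoped commutatorElement

/-- The weak commutativity relations inside the free product `G ∗ G`. -/
def chiRel (G : Type*) [Group G] : Subgroup (Monoid.Coprod G G) :=
  Subgroup.normalClosure
    {x | ∃ g : G, x = Monoid.Coprod.inl g * Monoid.Coprod.inr g *
      (Monoid.Coprod.inl g)⁻¹ * (Monoid.Coprod.inr g)⁻¹}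

instance chiRel_normal (G : Type*) [Group G] : (chiRel G).Normal :=
  Subgroup.normalClosure_normal

/-- The weak commutativity group `χ(G)`. -/
def Chi (G : Type*) [Group G] : Type _ := Monoid.Coprod G G ⧸ chiRel G

instance (G : Type*) [Group G] : Group (Chi G) :=
  inferInstanceAs (Group (Monoid.Coprod G G ⧸ chiRel G))

/-- The canonical map `G → χ(G)`, `g ↦ g`. -/
def chiIota1 (G : Type*) [Group G] : G →* Chi G :=
  (QuotientGroup.mk' (chiRel G)).comp Monoid.Coprod.inl

/-- The canonical map `G → χ(G)`, `g ↦ g^φ`. -/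
def chiIota2 (G : Type*) [Group G] : G →* Chi G :=
  (QuotientGroup.mk' (chiRel G)).comp Monoid.Coprod.inr

/-- `G₁ ≤ χ(G)`. -/
def chiG1 (G : Type*) [Group G] : Subgroup (Chi G) := (chiIota1 G).range

/-- `G₂ = G^φ ≤ χ(G)`. -/
def chiG2 (G : Type*) [Group G] : Subgroup (Chi G) := (chiIota2 G).range

/-- `L = ⟨g⁻¹ g^φ : g ∈ G⟩`. -/
def chiL (G : Type*) [Group G] : Subgroup (Chi G) :=
  Subgroup.closure {x | ∃ g : G, x = (chiIota1 G g)⁻¹ * chiIota2 G g}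

/-- `D = ⁅G₁, G₂⁆`. -/
def chiD (G : Type*) [Group G] : Subgroup (Chi G) := ⁅chiG1 G, chiG2 G⁆

/-- `L₁ = ⁅L, G₁⁆`. -/
def chiL1 (G : Type*) [Group G] : Subgroup (Chi G) := ⁅chiL G, chiG1 G⁆

/-- `L₂ = ⁅L, G₂⁆`. -/
def chiL2 (G : Type*) [Group G] : Subgroup (Chi G) := ⁅chiL G, chiG2 G⁆

/-- `R = ⁅⁅G₁, L⁆, G₂⁆`. -/
def chiR (G : Type*) [Group G] : Subgroup (Chi G) := ⁅⁅chiG1 G, chiL G⁆, chiG2 G⁆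

/-- `L₁₂ = ⁅L₁, L₂⁆`. -/
def chiL12 (G : Type*) [Group G] : Subgroup (Chi G) := ⁅chiL1 G, chiL2 G⁆

section ChiHelpers

variable {G : Type*} [Group G]

private lemma conj_eq_self_of_commute {W : Type*} [Group W] {x w : W}
    (h : Commute x w) : w * x * w⁻¹ = x := by
  rw [← h.eq, mul_assoc, mul_inv_cancel, mul_one]

/-- If `y` commutes with `z` then `⁅x*y, z⁆ = ⁅x, z⁆`. -/
private lemma commutator_mul_aux {W : Type*} [Group W] (x y z : W)
    (h2 : y * z = z * y) : ⁅x * y, z⁆ = ⁅x, z⁆ := by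
  calc ⁅x * y, z⁆ = x * (y * z) * y⁻¹ * x⁻¹ * z⁻¹ := by
        simp only [commutatorElement_def]; group
    _ = x * (z * y) * y⁻¹ * x⁻¹ * z⁻¹ := by rw [h2]
    _ = ⁅x, z⁆ := by simp only [commutatorElement_def]; group

/-- The key symmetry computation: if `x` commutes with `X`, `y` with `Y` and
`x⁻¹*y` with `X⁻¹*Y`, then `⁅x, Y⁆ = ⁅X, y⁆`. -/
private lemma sym_abs {W : Type*} [Group W] (x y X Y : W)
    (hx : x * X = X * x) (hy : y * Y = Y * y)
    (hxy : (x⁻¹ * y) * (X⁻¹ * Y) = (X⁻¹ * Y) * (x⁻¹ * y)) :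
    ⁅x, Y⁆ = ⁅X, y⁆ := by
  have hxc : Commute x X := hx
  have hyc : Commute y Y := hy
  have hxyc : Commute (x⁻¹ * y) (X⁻¹ * Y) := hxy
  have c1 : (x⁻¹ * y) * (Y⁻¹ * X) = (Y⁻¹ * X) * (x⁻¹ * y) := by
    have h := hxyc.inv_right
    have e : (X⁻¹ * Y)⁻¹ = Y⁻¹ * X := by rw [mul_inv_rev, inv_inv]
    rw [e] at h
    exact h.eq
  have hy' : Y⁻¹ * y = y * Y⁻¹ := hyc.symm.inv_left.eq
  have hx' : X * x⁻¹ = x⁻¹ * X := hxc.symm.inv_right.eq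
  have key : x⁻¹ * Y⁻¹ * y * X = Y⁻¹ * x⁻¹ * X * y := by
    calc x⁻¹ * Y⁻¹ * y * X = x⁻¹ * (Y⁻¹ * y) * X := by group
      _ = x⁻¹ * (y * Y⁻¹) * X := by rw [hy']
      _ = (x⁻¹ * y) * (Y⁻¹ * X) := by group
      _ = (Y⁻¹ * X) * (x⁻¹ * y) := c1
      _ = Y⁻¹ * (X * x⁻¹) * y := by group
      _ = Y⁻¹ * (x⁻¹ * X) * y := by rw [hx']
      _ = Y⁻¹ * x⁻¹ * X * y := by group
  have key2 : x⁻¹ * Y⁻¹ = Y⁻¹ * x⁻¹ * X * y * X⁻¹ * y⁻¹ := by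
    calc x⁻¹ * Y⁻¹ = x⁻¹ * Y⁻¹ * y * X * X⁻¹ * y⁻¹ := by group
      _ = Y⁻¹ * x⁻¹ * X * y * X⁻¹ * y⁻¹ := by rw [key]
  calc ⁅x, Y⁆ = x * Y * (x⁻¹ * Y⁻¹) := by simp only [commutatorElement_def]; group
    _ = x * Y * (Y⁻¹ * x⁻¹ * X * y * X⁻¹ * y⁻¹) := by rw [key2]
    _ = ⁅X, y⁆ := by simp only [commutatorElement_def]; group

private lemma conj_commutator_left {W : Type*} [Group W] (a b c : W) :
    c * ⁅a, b⁆ * c⁻¹ = ⁅a, c⁆⁻¹ * ⁅a, c * b⁆ := by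
  simp only [commutatorElement_def]; group

private lemma conj_commutator_left2 {W : Type*} [Group W] (a b c : W) :
    c * ⁅a, b⁆ * c⁻¹ = ⁅c * a, b⁆ * ⁅c, b⁆⁻¹ := by
  simp only [commutatorElement_def]; group

private lemma conj_mem_closure {W : Type*} [Group W] {S : Set W} (w : W)
    (h : ∀ s ∈ S, w * s * w⁻¹ ∈ Subgroup.closure S) :
    ∀ x ∈ Subgroup.closure S, w * x * w⁻¹ ∈ Subgroup.closure S := by
  intro x hx
  induction hx using Subgroup.closure_induction with
  | mem s hs => exact h s hs
  | one => simpa using one_mem _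
  | mul a b _ _ ha hb =>
    have e : w * (a * b) * w⁻¹ = (w * a * w⁻¹) * (w * b * w⁻¹) := by group
    rw [e]; exact mul_mem ha hb
  | inv a _ ha =>
    have e : w * a⁻¹ * w⁻¹ = (w * a * w⁻¹)⁻¹ := by group
    rw [e]; exact inv_mem ha

private lemma chi_commute (g : G) : Commute (chiIota1 G g) (chiIota2 G g) := by
  have h : (Monoid.Coprod.inl g * Monoid.Coprod.inr g * (Monoid.Coprod.inl g)⁻¹ *
      (Monoid.Coprod.inr g)⁻¹ : Monoid.Coprod G G) ∈ chiRel G :=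
    Subgroup.subset_normalClosure ⟨g, rfl⟩
  have h2 : chiIota1 G g * chiIota2 G g * (chiIota1 G g)⁻¹ * (chiIota2 G g)⁻¹ = 1 := by
    have h3 := (QuotientGroup.eq_one_iff _).mpr h
    exact h3
  have h4 : (chiIota1 G g * chiIota2 G g) * (chiIota2 G g * chiIota1 G g)⁻¹ = 1 := by
    rw [mul_inv_rev, ← mul_assoc]; exact h2
  exact mul_inv_eq_one.mp h4

private lemma chi_sym (g h : G) :
    ⁅chiIota1 G g, chiIota2 G h⁆ = ⁅chiIota2 G g, chiIota1 G h⁆ := by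
  refine sym_abs _ _ _ _ (chi_commute g).eq (chi_commute h).eq ?_
  have h3 := (chi_commute (g⁻¹ * h)).eq
  simpa [map_mul, map_inv] using h3

private lemma chi_comm_d_mu (g h k : G) :
    Commute ⁅chiIota1 G g, chiIota2 G h⁆ ((chiIota1 G k)⁻¹ * chiIota2 G k) := by
  set A := chiIota1 G k with hA
  set B := chiIota2 G k with hB
  set d := ⁅chiIota1 G g, chiIota2 G h⁆ with hd
  have e1 : B * d * B⁻¹ =
      ⁅chiIota1 G g, chiIota2 G k⁆⁻¹ * ⁅chiIota1 G g, chiIota2 G (k * h)⁆ := by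
    rw [hd, hB, map_mul]
    exact conj_commutator_left _ _ _
  have e2 : A * d * A⁻¹ =
      ⁅chiIota1 G g, chiIota2 G k⁆⁻¹ * ⁅chiIota1 G g, chiIota2 G (k * h)⁆ := by
    have e2' : A * d * A⁻¹ =
        ⁅chiIota2 G g, chiIota1 G k⁆⁻¹ * ⁅chiIota2 G g, chiIota1 G (k * h)⁆ := by
      rw [hd, chi_sym g h, hA, map_mul]
      exact conj_commutator_left _ _ _
    rw [e2', ← chi_sym g k, ← chi_sym g (k * h)]
  have conj_eq : A * d * A⁻¹ = B * d * B⁻¹ := e2.trans e1.symm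
  have h1 : d * (A⁻¹ * B) = (A⁻¹ * B) * d := by
    calc d * (A⁻¹ * B) = A⁻¹ * (A * d * A⁻¹) * B := by group
      _ = A⁻¹ * (B * d * B⁻¹) * B := by rw [conj_eq]
      _ = (A⁻¹ * B) * d := by group
  exact h1

private lemma chi_d_commute_L (g h : G) {l : Chi G} (hl : l ∈ chiL G) :
    Commute ⁅chiIota1 G g, chiIota2 G h⁆ l := by
  induction hl using Subgroup.closure_induction with
  | mem x hx => obtain ⟨k, rfl⟩ := hx; exact chi_comm_d_mu g h k
  | one => exact Commute.one_right _
  | mul x y _ _ hx hy => exact hx.mul_right hy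
  | inv x _ hx => exact hx.inv_right

private lemma chi_D_commute_L {d l : Chi G} (hd : d ∈ chiD G) (hl : l ∈ chiL G) :
    Commute d l := by
  have hd' : d ∈ Subgroup.closure {x : Chi G |
      ∃ g₁ ∈ chiG1 G, ∃ g₂ ∈ chiG2 G, ⁅g₁, g₂⁆ = x} := by
    rwa [← Subgroup.commutator_def]
  clear hd
  induction hd' using Subgroup.closure_induction with
  | mem x hx =>
    obtain ⟨a, ha, b, hb, rfl⟩ := hx
    obtain ⟨g, rfl⟩ := ha
    obtain ⟨h, rfl⟩ := hb
    exact chi_d_commute_L g h hl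
  | one => exact Commute.one_left _
  | mul x y _ _ hx hy => exact hx.mul_left hy
  | inv x _ hx => exact hx.inv_left

private lemma chi_conjL1 (g : G) :
    ∀ l ∈ chiL G, chiIota1 G g * l * (chiIota1 G g)⁻¹ ∈ chiL G := by
  refine conj_mem_closure _ ?_
  rintro s ⟨k, rfl⟩
  have e : chiIota1 G g * ((chiIota1 G k)⁻¹ * chiIota2 G k) * (chiIota1 G g)⁻¹ =
      ((chiIota1 G (k * g⁻¹))⁻¹ * chiIota2 G (k * g⁻¹)) *
        ((chiIota1 G g⁻¹)⁻¹ * chiIota2 G g⁻¹)⁻¹ := by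
    simp only [map_mul, map_inv]; group
  rw [e]
  exact mul_mem (Subgroup.subset_closure ⟨k * g⁻¹, rfl⟩)
    (inv_mem (Subgroup.subset_closure ⟨g⁻¹, rfl⟩))

private lemma chi_conjL2 (g : G) :
    ∀ l ∈ chiL G, chiIota2 G g * l * (chiIota2 G g)⁻¹ ∈ chiL G := by
  refine conj_mem_closure _ ?_
  rintro s ⟨k, rfl⟩
  have e : chiIota2 G g * ((chiIota1 G k)⁻¹ * chiIota2 G k) * (chiIota2 G g)⁻¹ =
      ((chiIota1 G g⁻¹)⁻¹ * chiIota2 G g⁻¹)⁻¹ *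
        ((chiIota1 G (k * g⁻¹))⁻¹ * chiIota2 G (k * g⁻¹)) := by
    simp only [map_mul, map_inv]; group
  rw [e]
  exact mul_mem (inv_mem (Subgroup.subset_closure ⟨g⁻¹, rfl⟩))
    (Subgroup.subset_closure ⟨k * g⁻¹, rfl⟩)

private lemma chiL1_le_chiL : chiL1 G ≤ chiL G := by
  show ⁅chiL G, chiG1 G⁆ ≤ chiL G
  rw [Subgroup.commutator_le]
  intro l hl x hx
  obtain ⟨g, rfl⟩ := hx
  have e : ⁅l, chiIota1 G g⁆ = l * (chiIota1 G g * l⁻¹ * (chiIota1 G g)⁻¹) := by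
    simp only [commutatorElement_def]; group
  rw [e]
  exact mul_mem hl (chi_conjL1 g l⁻¹ (inv_mem hl))

private lemma chiL2_le_chiL : chiL2 G ≤ chiL G := by
  show ⁅chiL G, chiG2 G⁆ ≤ chiL G
  rw [Subgroup.commutator_le]
  intro l hl x hx
  obtain ⟨g, rfl⟩ := hx
  have e : ⁅l, chiIota2 G g⁆ = l * (chiIota2 G g * l⁻¹ * (chiIota2 G g)⁻¹) := by
    simp only [commutatorElement_def]; group
  rw [e]
  exact mul_mem hl (chi_conjL2 g l⁻¹ (inv_mem hl))

private lemma chi_genTop :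
    Subgroup.closure (Set.range (chiIota1 G) ∪ Set.range (chiIota2 G)) = (⊤ : Subgroup (Chi G)) := by
  rw [eq_top_iff]
  rintro x -
  obtain ⟨y, rfl⟩ := QuotientGroup.mk'_surjective (chiRel G) x
  induction y using Monoid.Coprod.induction_on with
  | inl m => exact Subgroup.subset_closure (Or.inl ⟨m, rfl⟩)
  | inr n => exact Subgroup.subset_closure (Or.inr ⟨n, rfl⟩)
  | mul a b ha hb => rw [map_mul]; exact mul_mem ha hb

private lemma chi_conjD1 (g : G) :
    ∀ x ∈ chiD G, chiIota1 G g * x * (chiIota1 G g)⁻¹ ∈ chiD G := by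
  have hD : chiD G = Subgroup.closure {x : Chi G |
      ∃ g₁ ∈ chiG1 G, ∃ g₂ ∈ chiG2 G, ⁅g₁, g₂⁆ = x} := Subgroup.commutator_def _ _
  rw [hD]
  refine conj_mem_closure _ ?_
  rintro s ⟨a, ha, b, hb, rfl⟩
  obtain ⟨u, rfl⟩ := ha
  obtain ⟨v, rfl⟩ := hb
  have e : chiIota1 G g * ⁅chiIota1 G u, chiIota2 G v⁆ * (chiIota1 G g)⁻¹ =
      ⁅chiIota1 G (g * u), chiIota2 G v⁆ * ⁅chiIota1 G g, chiIota2 G v⁆⁻¹ := by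
    rw [map_mul]
    exact conj_commutator_left2 _ _ _
  rw [e]
  exact mul_mem (Subgroup.subset_closure ⟨chiIota1 G (g * u), ⟨g * u, rfl⟩,
      chiIota2 G v, ⟨v, rfl⟩, rfl⟩)
    (inv_mem (Subgroup.subset_closure ⟨chiIota1 G g, ⟨g, rfl⟩,
      chiIota2 G v, ⟨v, rfl⟩, rfl⟩))

private lemma chi_conjD2 (g : G) :
    ∀ x ∈ chiD G, chiIota2 G g * x * (chiIota2 G g)⁻¹ ∈ chiD G := by
  have hD : chiD G = Subgroup.closure {x : Chi G |
      ∃ g₁ ∈ chiG1 G, ∃ g₂ ∈ chiG2 G, ⁅g₁, g₂⁆ = x} := Subgroup.commutator_def _ _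
  rw [hD]
  refine conj_mem_closure _ ?_
  rintro s ⟨a, ha, b, hb, rfl⟩
  obtain ⟨u, rfl⟩ := ha
  obtain ⟨v, rfl⟩ := hb
  have e : chiIota2 G g * ⁅chiIota1 G u, chiIota2 G v⁆ * (chiIota2 G g)⁻¹ =
      ⁅chiIota1 G u, chiIota2 G g⁆⁻¹ * ⁅chiIota1 G u, chiIota2 G (g * v)⁆ := by
    rw [map_mul]
    exact conj_commutator_left _ _ _
  rw [e]
  exact mul_mem (inv_mem (Subgroup.subset_closure ⟨chiIota1 G u, ⟨u, rfl⟩,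
      chiIota2 G g, ⟨g, rfl⟩, rfl⟩))
    (Subgroup.subset_closure ⟨chiIota1 G u, ⟨u, rfl⟩,
      chiIota2 G (g * v), ⟨g * v, rfl⟩, rfl⟩)

private lemma chiD_normal : (chiD G).Normal := by
  rw [← Subgroup.normalizer_eq_top_iff, eq_top_iff, ← chi_genTop, Subgroup.closure_le]
  rintro w (⟨g, rfl⟩ | ⟨g, rfl⟩)
  · rw [SetLike.mem_coe, Subgroup.mem_normalizer_iff]
    intro x
    constructor
    · intro hx; exact chi_conjD1 g x hx
    · intro hx
      have h2 := chi_conjD1 g⁻¹ _ hx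
      rw [map_inv, inv_inv] at h2
      have e : (chiIota1 G g)⁻¹ * (chiIota1 G g * x * (chiIota1 G g)⁻¹) * chiIota1 G g = x := by
        group
      rwa [e] at h2
  · rw [SetLike.mem_coe, Subgroup.mem_normalizer_iff]
    intro x
    constructor
    · intro hx; exact chi_conjD2 g x hx
    · intro hx
      have h2 := chi_conjD2 g⁻¹ _ hx
      rw [map_inv, inv_inv] at h2
      have e : (chiIota2 G g)⁻¹ * (chiIota2 G g * x * (chiIota2 G g)⁻¹) * chiIota2 G g = x := by
        group
      rwa [e] at h2

private lemma chi_commutator_L1_L2_mem_D {a b : Chi G}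
    (ha : a ∈ chiL1 G) (hb : b ∈ chiL2 G) : ⁅a, b⁆ ∈ chiD G := by
  haveI : (chiD G).Normal := chiD_normal
  set q := QuotientGroup.mk' (chiD G) with hq
  have hj : ∀ u v : G, Commute (q (chiIota1 G u)) (q (chiIota2 G v)) := by
    intro u v
    rw [← commutatorElement_eq_one_iff_commute, ← map_commutatorElement]
    rw [hq, QuotientGroup.mk'_apply, QuotientGroup.eq_one_iff]
    exact Subgroup.commutator_mem_commutator ⟨u, rfl⟩ ⟨v, rfl⟩
  have hqL : ∀ l ∈ chiL G, ∃ u v : G, q l = q (chiIota1 G u) * q (chiIota2 G v) := by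
    intro l hl
    induction hl using Subgroup.closure_induction with
    | mem s hs =>
      obtain ⟨k, rfl⟩ := hs
      exact ⟨k⁻¹, k, by simp [map_mul, map_inv]⟩
    | one => exact ⟨1, 1, by simp⟩
    | mul x y _ _ ihx ihy =>
      obtain ⟨u, v, hxe⟩ := ihx
      obtain ⟨u', v', hye⟩ := ihy
      refine ⟨u * u', v * v', ?_⟩
      rw [map_mul, hxe, hye, map_mul, map_mul, map_mul, map_mul]
      have hc : (q (chiIota2 G v)) * (q (chiIota1 G u')) =
          (q (chiIota1 G u')) * (q (chiIota2 G v)) := (hj u' v).symm.eq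
      calc q (chiIota1 G u) * q (chiIota2 G v) * (q (chiIota1 G u') * q (chiIota2 G v'))
          = q (chiIota1 G u) * (q (chiIota2 G v) * q (chiIota1 G u')) * q (chiIota2 G v') := by
            group
        _ = q (chiIota1 G u) * (q (chiIota1 G u') * q (chiIota2 G v)) * q (chiIota2 G v') := by
            rw [hc]
        _ = q (chiIota1 G u) * q (chiIota1 G u') * (q (chiIota2 G v) * q (chiIota2 G v')) := by
            group
    | inv x _ ihx =>
      obtain ⟨u, v, hxe⟩ := ihx
      refine ⟨u⁻¹, v⁻¹, ?_⟩
      rw [map_inv, hxe, mul_inv_rev, map_inv, map_inv, map_inv, map_inv]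
      exact ((hj u v).inv_left.inv_right).symm.eq
  have hL1comap : chiL1 G ≤ Subgroup.comap q ((q.comp (chiIota1 G)).range) := by
    show ⁅chiL G, chiG1 G⁆ ≤ _
    rw [Subgroup.commutator_le]
    intro l hl x hx
    obtain ⟨g, rfl⟩ := hx
    obtain ⟨u, v, hluv⟩ := hqL l hl
    rw [Subgroup.mem_comap, map_commutatorElement, hluv]
    have e : ⁅q (chiIota1 G u) * q (chiIota2 G v), q (chiIota1 G g)⁆ =
        ⁅q (chiIota1 G u), q (chiIota1 G g)⁆ :=
      commutator_mul_aux _ _ _ ((hj g v).symm.eq)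
    rw [e]
    exact ⟨⁅u, g⁆, by rw [MonoidHom.comp_apply, map_commutatorElement, map_commutatorElement]⟩
  have hL2comap : chiL2 G ≤ Subgroup.comap q ((q.comp (chiIota2 G)).range) := by
    show ⁅chiL G, chiG2 G⁆ ≤ _
    rw [Subgroup.commutator_le]
    intro l hl x hx
    obtain ⟨g, rfl⟩ := hx
    obtain ⟨u, v, hluv⟩ := hqL l hl
    rw [Subgroup.mem_comap, map_commutatorElement, hluv, (hj u v).eq]
    have e : ⁅q (chiIota2 G v) * q (chiIota1 G u), q (chiIota2 G g)⁆ =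
        ⁅q (chiIota2 G v), q (chiIota2 G g)⁆ :=
      commutator_mul_aux _ _ _ ((hj u g).eq)
    rw [e]
    exact ⟨⁅v, g⁆, by rw [MonoidHom.comp_apply, map_commutatorElement, map_commutatorElement]⟩
  obtain ⟨u, hu⟩ := hL1comap ha
  obtain ⟨v, hv⟩ := hL2comap hb
  have h1 : q ⁅a, b⁆ = 1 := by
    rw [map_commutatorElement, ← hu, ← hv, MonoidHom.comp_apply, MonoidHom.comp_apply]
    exact commutatorElement_eq_one_iff_commute.mpr (hj u v)
  rw [hq, QuotientGroup.mk'_apply, QuotientGroup.eq_one_iff] at h1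
  exact h1

end ChiHelpers

theorem commutator_bilinear_L1_L2 (G : Type*) [Group G]
    (a1 a2 b1 b2 : Chi G) (ha1 : a1 ∈ chiL1 G) (ha2 : a2 ∈ chiL1 G)
    (hb1 : b1 ∈ chiL2 G) (hb2 : b2 ∈ chiL2 G) :
    ⁅a1 * a2, b1 * b2⁆ = ⁅a1, b1⁆ * ⁅a1, b2⁆ * ⁅a2, b1⁆ * ⁅a2, b2⁆ := by
  have ha1L : a1 ∈ chiL G := chiL1_le_chiL ha1
  have ha2L : a2 ∈ chiL G := chiL1_le_chiL ha2
  have hb1L : b1 ∈ chiL G := chiL2_le_chiL hb1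
  have hb2L : b2 ∈ chiL G := chiL2_le_chiL hb2
  have c11 : ⁅a1, b1⁆ ∈ chiD G := chi_commutator_L1_L2_mem_D ha1 hb1
  have c12 : ⁅a1, b2⁆ ∈ chiD G := chi_commutator_L1_L2_mem_D ha1 hb2
  have c21 : ⁅a2, b1⁆ ∈ chiD G := chi_commutator_L1_L2_mem_D ha2 hb1
  have c22 : ⁅a2, b2⁆ ∈ chiD G := chi_commutator_L1_L2_mem_D ha2 hb2
  have hmemL : ∀ (x y : Chi G), x ∈ chiL G → y ∈ chiL G → ⁅x, y⁆ ∈ chiL G := by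
    intro x y hx hy
    rw [commutatorElement_def]
    exact mul_mem (mul_mem (mul_mem hx hy) (inv_mem hx)) (inv_mem hy)
  have E1 : ⁅a1, b1 * b2⁆ = ⁅a1, b1⁆ * ⁅a1, b2⁆ := by
    have f2 : ⁅a1, b1 * b2⁆ = ⁅a1, b1⁆ * (b1 * ⁅a1, b2⁆ * b1⁻¹) := by
      simp only [commutatorElement_def]; group
    rw [f2, conj_eq_self_of_commute (chi_D_commute_L c12 hb1L)]
  have E2 : ⁅a2, b1 * b2⁆ = ⁅a2, b1⁆ * ⁅a2, b2⁆ := by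
    have f2 : ⁅a2, b1 * b2⁆ = ⁅a2, b1⁆ * (b1 * ⁅a2, b2⁆ * b1⁻¹) := by
      simp only [commutatorElement_def]; group
    rw [f2, conj_eq_self_of_commute (chi_D_commute_L c22 hb1L)]
  have F1 : ⁅a1 * a2, b1 * b2⁆ = a1 * ⁅a2, b1 * b2⁆ * a1⁻¹ * ⁅a1, b1 * b2⁆ := by
    simp only [commutatorElement_def]; group
  rw [F1, E1, E2]
  have hA : a1 * (⁅a2, b1⁆ * ⁅a2, b2⁆) * a1⁻¹ = ⁅a2, b1⁆ * ⁅a2, b2⁆ :=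
    conj_eq_self_of_commute
      ((chi_D_commute_L c21 ha1L).mul_left (chi_D_commute_L c22 ha1L))
  have hswap : (⁅a2, b1⁆ * ⁅a2, b2⁆) * (⁅a1, b1⁆ * ⁅a1, b2⁆) =
      (⁅a1, b1⁆ * ⁅a1, b2⁆) * (⁅a2, b1⁆ * ⁅a2, b2⁆) := by
    have h1 : Commute (⁅a2, b1⁆ * ⁅a2, b2⁆) (⁅a1, b1⁆ * ⁅a1, b2⁆) := by
      have z1 : ⁅a1, b1⁆ ∈ chiL G := hmemL a1 b1 ha1L hb1L
      have z2 : ⁅a1, b2⁆ ∈ chiL G := hmemL a1 b2 ha1L hb2L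
      exact ((chi_D_commute_L c21 z1).mul_right (chi_D_commute_L c21 z2)).mul_left
        ((chi_D_commute_L c22 z1).mul_right (chi_D_commute_L c22 z2))
    exact h1.eq
  calc a1 * (⁅a2, b1⁆ * ⁅a2, b2⁆) * a1⁻¹ * (⁅a1, b1⁆ * ⁅a1, b2⁆)
      = (⁅a2, b1⁆ * ⁅a2, b2⁆) * (⁅a1, b1⁆ * ⁅a1, b2⁆) := by rw [hA]
    _ = (⁅a1, b1⁆ * ⁅a1, b2⁆) * (⁅a2, b1⁆ * ⁅a2, b2⁆) := hswap
    _ = ⁅a1, b1⁆ * ⁅a1, b2⁆ * ⁅a2, b1⁆ * ⁅a2, b2⁆ :=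
      (mul_assoc (⁅a1, b1⁆ * ⁅a1, b2⁆) ⁅a2, b1⁆ ⁅a2, b2⁆).symm
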